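/- Let 0 < ε < 1 and let G = (V, E) be a finite simple graph. Suppose G contains an induced forest W ⊆ V without isolated vertices, with l leaves and c connected components, such that |W| − l + c ≥ ε·|V|. Let ℓ be the number of distinct eigenvalues of the Laplacian matrix of G. Then ℓ ≥ 1/(1 − ε). -/

import Mathlib

set_option linter.unusedSectionVars false
set_option maxHeartbeats 1000000

open SimpleGraph Matrix

section TreeAux
variable {α : Type*} [DecidableEq α]


lemma path_length_eq_dist {H : SimpleGraph α} (hH : H.IsAcyclic) {u v : α}
    (p : H.Walk u v) (hp : p.IsPath) : p.length = H.dist u v := by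
  have hr : H.Reachable u v := ⟨p⟩
  obtain ⟨q, hq, hql⟩ := hr.exists_path_of_dist
  have h := hH.path_unique ⟨p, hp⟩ ⟨q, hq⟩
  rw [← hql]
  exact congrArg Walk.length (congrArg Subtype.val h)

lemma concat_isPath' {H : SimpleGraph α} {u v w : α} (p : H.Walk u v) (h : H.Adj v w)
    (hp : p.IsPath) (hw : w ∉ p.support) : (p.concat h).IsPath := by
  rw [← Walk.reverse_reverse (p.concat h), Walk.reverse_concat]
  exact (Walk.IsPath.cons hp.reverse (by simpa using hw)).reverse

lemma adj_dist_cases {H : SimpleGraph α} (hH : H.IsAcyclic) {r u v : α}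
    (huv : H.Adj u v) (hr : H.Reachable r v) :
    H.dist r u + 1 = H.dist r v ∨ H.dist r u = H.dist r v + 1 := by
  obtain ⟨p, hp, hpl⟩ := hr.exists_path_of_dist
  have hadj1 : H.dist u v = 1 :=
    (path_length_eq_dist hH (Walk.cons huv Walk.nil) (by simp [huv.ne])).symm.trans rfl
  by_cases hu : u ∈ p.support
  · left
    have h1 := hp.takeUntil hu
    have h2 := hp.dropUntil hu
    have hlen : (p.takeUntil u hu).length + (p.dropUntil u hu).length = p.length := by
      have h := congrArg Walk.length (p.take_spec hu)
      rwa [Walk.length_append] at h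
    have e1 : (p.takeUntil u hu).length = H.dist r u := path_length_eq_dist hH _ h1
    have e2 : (p.dropUntil u hu).length = H.dist u v := path_length_eq_dist hH _ h2
    omega
  · right
    have hq : (p.concat huv.symm).IsPath := concat_isPath' p huv.symm hp hu
    have := path_length_eq_dist hH _ hq
    rw [Walk.length_concat] at this
    omega

lemma parent_unique {H : SimpleGraph α} (hH : H.IsAcyclic) {r v u₁ u₂ : α}
    (h1 : H.Adj u₁ v) (h2 : H.Adj u₂ v)
    (hr1 : H.Reachable r u₁) (hr2 : H.Reachable r u₂)
    (d1 : H.dist r u₁ + 1 = H.dist r v) (d2 : H.dist r u₂ + 1 = H.dist r v) :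
    u₁ = u₂ := by
  have build : ∀ (u : α) (h : H.Adj u v), H.Reachable r u → H.dist r u + 1 = H.dist r v →
      ∃ (q : H.Walk r v), q.IsPath ∧ q.reverse.getVert 1 = u := by
    intro u h hru hd
    obtain ⟨p, hp, hpl⟩ := hru.exists_path_of_dist
    have hv : v ∉ p.support := by
      intro hv
      have ht := hp.takeUntil hv
      have hdrop := hp.dropUntil hv
      have hlen : (p.takeUntil v hv).length + (p.dropUntil v hv).length = p.length := by
        have h' := congrArg Walk.length (p.take_spec hv)
        rwa [Walk.length_append] at h'
      have e1 : (p.takeUntil v hv).length = H.dist r v := path_length_eq_dist hH _ ht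
      have e2 : (p.dropUntil v hv).length = H.dist v u :=
        path_length_eq_dist hH _ hdrop
      have hadj1 : H.dist v u = 1 :=
        (path_length_eq_dist hH (Walk.cons h.symm Walk.nil) (by simp [h.ne'])).symm.trans rfl
      omega
    refine ⟨p.concat h, concat_isPath' p h hp hv, ?_⟩
    rw [Walk.reverse_concat]
    simp
  obtain ⟨q1, hq1, hg1⟩ := build u₁ h1 hr1 d1
  obtain ⟨q2, hq2, hg2⟩ := build u₂ h2 hr2 d2
  have : q1 = q2 := congrArg Subtype.val (hH.path_unique ⟨q1, hq1⟩ ⟨q2, hq2⟩)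
  rw [← hg1, ← hg2, this]

lemma exists_leaf [Fintype α] {H : SimpleGraph α} [DecidableRel H.Adj]
    (hH : H.IsAcyclic) (hdeg : ∀ u : α, 0 < H.degree u) (C : H.ConnectedComponent) :
    ∃ v, H.connectedComponentMk v = C ∧ H.degree v = 1 := by
  classical
  obtain ⟨r, rfl⟩ := C.exists_rep
  obtain ⟨v, hv, hmax⟩ := Finset.exists_max_image
    (Finset.univ.filter fun v => H.connectedComponentMk v = H.connectedComponentMk r)
    (H.dist r) ⟨r, by simp [SimpleGraph.Reachable.refl]⟩
  have hvC : H.connectedComponentMk v = H.connectedComponentMk r :=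
    (Finset.mem_filter.mp hv).2
  refine ⟨v, hvC, ?_⟩
  have hrv : H.Reachable r v := (ConnectedComponent.exact hvC).symm
  obtain ⟨u₀, hu₀⟩ := Finset.card_pos.mp (hdeg v)
  have hnb : ∀ u ∈ H.neighborFinset v, H.dist r u + 1 = H.dist r v := by
    intro u hu
    have hadj : H.Adj u v := ((H.mem_neighborFinset v u).mp hu).symm
    have hru : H.Reachable r u := hrv.trans hadj.symm.reachable
    rcases adj_dist_cases hH hadj hrv with h | h
    · exact h
    · exfalso
      have huC : H.connectedComponentMk u = H.connectedComponentMk r :=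
        ConnectedComponent.sound hru.symm
      have := hmax u (Finset.mem_filter.mpr ⟨Finset.mem_univ u, huC⟩)
      omega
  have : H.neighborFinset v = {u₀} := by
    apply Finset.eq_singleton_iff_unique_mem.mpr
    refine ⟨hu₀, fun u hu => ?_⟩
    have hadju : H.Adj u v := ((H.mem_neighborFinset v u).mp hu).symm
    have hadj0 : H.Adj u₀ v := ((H.mem_neighborFinset v u₀).mp hu₀).symm
    exact parent_unique hH hadju hadj0 (hrv.trans hadju.symm.reachable)
      (hrv.trans hadj0.symm.reachable) (hnb u hu) (hnb u₀ hu₀)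
  rw [SimpleGraph.degree, this, Finset.card_singleton]

lemma propagation [Fintype α] {H : SimpleGraph α} [DecidableRel H.Adj]
    (hH : H.IsAcyclic) (r : α) (y cfn : α → ℝ)
    (heq : ∀ u, cfn u * y u = ∑ w ∈ H.neighborFinset u, y w)
    (hleaf : ∀ u, H.Reachable r u → u ≠ r → H.degree u = 1 → y u = 0)
    (hdeg : ∀ u : α, 0 < H.degree u) :
    ∀ v, H.Reachable r v → y v = 0 := by
  suffices h : ∀ d v, H.Reachable r v → Fintype.card α ≤ H.dist r v + d → y v = 0 by
    intro v hv
    exact h (Fintype.card α) v hv (by omega)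
  intro d
  induction d with
  | zero =>
    intro v hv hd
    exfalso
    obtain ⟨p, hp, hl⟩ := hv.exists_path_of_dist
    have := hp.length_lt
    omega
  | succ d ih =>
    intro v hv hd
    by_cases hle : Fintype.card α ≤ H.dist r v + d
    · exact ih v hv hle
    by_cases hcase : v ≠ r ∧ H.degree v = 1
    · exact hleaf v hv hcase.1 hcase.2
    push_neg at hcase
    have hnb : ∃ u, H.Adj v u ∧ H.dist r u = H.dist r v + 1 := by
      by_cases hvr : v = r
      · obtain ⟨u, hu⟩ := Finset.card_pos.mp (hdeg v)
        have hadj : H.Adj u v := ((H.mem_neighborFinset v u).mp hu).symm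
        have hdvr : H.dist r v = 0 := by rw [hvr, SimpleGraph.dist_self]
        rcases adj_dist_cases hH hadj hv with h | h
        · omega
        · exact ⟨u, hadj.symm, by omega⟩
      · have hdv : 2 ≤ H.degree v := by
          have h1 := hdeg v
          have h2 := hcase hvr
          omega
        obtain ⟨u₁, hu₁, u₂, hu₂, hne⟩ := Finset.one_lt_card.mp hdv
        have ha1 : H.Adj u₁ v := ((H.mem_neighborFinset v u₁).mp hu₁).symm
        have ha2 : H.Adj u₂ v := ((H.mem_neighborFinset v u₂).mp hu₂).symm
        rcases adj_dist_cases hH ha1 hv with h1 | h1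
        · rcases adj_dist_cases hH ha2 hv with h2 | h2
          · exact absurd (parent_unique hH ha1 ha2 (hv.trans ha1.symm.reachable)
              (hv.trans ha2.symm.reachable) h1 h2) hne
          · exact ⟨u₂, ha2.symm, h2⟩
        · exact ⟨u₁, ha1.symm, h1⟩
    obtain ⟨u, hvu, hu⟩ := hnb
    have hru : H.Reachable r u := hv.trans hvu.reachable
    have hyu : y u = 0 := ih u hru (by omega)
    have hsum : ∑ w ∈ H.neighborFinset u, y w = y v := by
      apply Finset.sum_eq_single_of_mem v ((H.mem_neighborFinset u v).mpr hvu.symm)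
      intro w hw hwv
      have hw' : H.Adj u w := (H.mem_neighborFinset u w).mp hw
      have hrw : H.Reachable r w := hru.trans hw'.reachable
      rcases adj_dist_cases hH hw'.symm hru with h' | h'
      · exact absurd (parent_unique hH hw'.symm hvu (hru.trans hw'.reachable)
          hv h' (by omega)) hwv
      · exact ih w hrw (by omega)
    have h := heq u
    rw [hyu, mul_zero, hsum] at h
    exact h.symm

end TreeAux

section Forest
variable {V : Type*} [Fintype V] [DecidableEq V] (G : SimpleGraph V) [DecidableRel G.Adj]
  (W : Set V)

lemma induce_adj_iff' {a b : ↥W} : (G.induce W).Adj a b ↔ G.Adj ↑a ↑b := Iff.rfl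

noncomputable instance : DecidableRel (G.induce W).Adj := fun a b => ‹DecidableRel G.Adj› _ _

lemma image_induce_neighborSet (u : ↥W) :
    Subtype.val '' ((G.induce W).neighborSet u) = G.neighborSet ↑u ∩ W := by
  ext w
  simp only [Set.mem_image, SimpleGraph.mem_neighborSet, Set.mem_inter_iff]
  constructor
  · rintro ⟨b, hb, rfl⟩
    exact ⟨hb, b.2⟩
  · rintro ⟨h1, h2⟩
    exact ⟨⟨w, h2⟩, h1, rfl⟩

lemma sum_neighbors_eq [Fintype ↥W] (x : V → ℝ) (h0 : ∀ v, v ∉ W → x v = 0) (u : ↥W) :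
    ∑ w ∈ G.neighborFinset ↑u, x w = ∑ w ∈ (G.induce W).neighborFinset u, x ↑w := by
  have hinj : ∀ a ∈ (G.induce W).neighborFinset u, ∀ b ∈ (G.induce W).neighborFinset u,
      (Subtype.val a : V) = ↑b → a = b := fun a _ b _ h => Subtype.ext h
  rw [← Finset.sum_image hinj]
  apply (Finset.sum_subset ?_ ?_).symm
  · intro w hw
    simp only [Finset.mem_image] at hw
    obtain ⟨b, hb, rfl⟩ := hw
    exact (G.mem_neighborFinset _ _).mpr ((induce_adj_iff' G W).mp (((G.induce W).mem_neighborFinset _ _).mp hb))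
  · intro w hw hnt
    apply h0
    intro hW
    apply hnt
    refine Finset.mem_image.mpr ⟨⟨w, hW⟩, ?_, rfl⟩
    exact ((G.induce W).mem_neighborFinset _ _).mpr ((induce_adj_iff' G W).mpr ((G.mem_neighborFinset _ _).mp hw))

lemma forest_vanish [Fintype ↥W]
    (hforest : (G.induce W).IsAcyclic)
    (hdeg : ∀ u : ↥W, 0 < (G.induce W).degree u)
    (root : (G.induce W).ConnectedComponent → ↥W)
    (hroot : ∀ C, (G.induce W).connectedComponentMk (root C) = C)
    (μ : ℝ) (x : V → ℝ)
    (heig : G.lapMatrix ℝ *ᵥ x = μ • x)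
    (h0 : ∀ v, v ∉ W → x v = 0)
    (hleaf0 : ∀ u : ↥W, (G.induce W).degree u = 1 → (∀ C, u ≠ root C) → x ↑u = 0) :
    x = 0 := by
  have heq : ∀ u : ↥W, ((G.degree ↑u : ℝ) - μ) * x ↑u =
      ∑ w ∈ (G.induce W).neighborFinset u, x ↑w := by
    intro u
    have h1 : (G.lapMatrix ℝ *ᵥ x) ↑u = μ * x ↑u := by
      rw [heig]; simp
    rw [SimpleGraph.lapMatrix_mulVec_apply] at h1
    rw [← sum_neighbors_eq G W x h0 u]
    ring_nf
    ring_nf at h1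
    linarith
  funext v
  by_cases hv : v ∈ W
  · let u : ↥W := ⟨v, hv⟩
    let C := (G.induce W).connectedComponentMk u
    have hreach : (G.induce W).Reachable (root C) u :=
      ((SimpleGraph.ConnectedComponent.exact (hroot C)).symm.trans
        (SimpleGraph.ConnectedComponent.exact rfl).symm).symm
    refine propagation hforest (root C) (fun u => x ↑u) (fun u => (G.degree ↑u : ℝ) - μ)
      heq ?_ hdeg u hreach
    · intro u' hru' hne hdeg1
      apply hleaf0 u' hdeg1
      intro C' hC'
      apply hne
      have h1 : (G.induce W).connectedComponentMk u' = C' := hC' ▸ hroot C'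
      have h2 : (G.induce W).connectedComponentMk u' = C :=
        SimpleGraph.ConnectedComponent.sound hru'.symm |>.trans (hroot C)
      rw [hC']
      rw [h1] at h2
      rw [h2]
  · rw [h0 v hv]; rfl

end Forest

section Eigen
variable {V : Type*} [Fintype V] [DecidableEq V]

lemma eigen_basis_indep {M : Matrix V V ℝ} (hM : M.IsHermitian) :
    LinearIndependent ℝ (fun i : V => (⇑(hM.eigenvectorBasis i) : V → ℝ)) := by
  have h := hM.eigenvectorBasis.toBasis.linearIndependent
  have h2 := h.map' (WithLp.linearEquiv 2 ℝ (V → ℝ)).toLinearMap (LinearEquiv.ker _)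
  exact h2

lemma eigenvalues_hasEigenvalue {M : Matrix V V ℝ} (hM : M.IsHermitian) (i : V) :
    Module.End.HasEigenvalue (Matrix.toLin' M) (hM.eigenvalues i) := by
  apply Module.End.hasEigenvalue_of_hasEigenvector (x := (⇑(hM.eigenvectorBasis i) : V → ℝ))
  constructor
  · rw [Module.End.mem_eigenspace_iff, Matrix.toLin'_apply, hM.mulVec_eigenvectorBasis]
  · exact fun h => hM.eigenvectorBasis.toBasis.ne_zero i (by simpa using h)

lemma fiber_bound {M : Matrix V V ℝ} (hM : M.IsHermitian)
    (S : Set V) [Fintype ↥S] (μ : ℝ)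
    (hvanish : ∀ x : V → ℝ, M *ᵥ x = μ • x → (∀ v ∈ S, x v = 0) → x = 0) :
    (Finset.univ.filter fun i : V => hM.eigenvalues i = μ).card ≤ S.ncard := by
  classical
  set fam : {i : V // hM.eigenvalues i = μ} → (V → ℝ) :=
    (fun i : V => (⇑(hM.eigenvectorBasis i) : V → ℝ)) ∘ Subtype.val with hfam
  have hli : LinearIndependent ℝ fam :=
    (eigen_basis_indep hM).comp Subtype.val Subtype.val_injective
  set ρ : (V → ℝ) →ₗ[ℝ] (↥S → ℝ) := LinearMap.funLeft ℝ ℝ Subtype.val with hρ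
  have hdisj : Disjoint (Submodule.span ℝ (Set.range fam)) (LinearMap.ker ρ) := by
    rw [Submodule.disjoint_def]
    intro x hx hker
    have hsub : Submodule.span ℝ (Set.range fam) ≤
        LinearMap.ker (M.mulVecLin - μ • LinearMap.id) := by
      rw [Submodule.span_le]
      rintro _ ⟨i, rfl⟩
      rw [SetLike.mem_coe, LinearMap.mem_ker, LinearMap.sub_apply]
      have : M *ᵥ fam i = μ • fam i := by
        rw [hfam]
        show M *ᵥ (⇑(hM.eigenvectorBasis ↑i) : V → ℝ) = μ • ⇑(hM.eigenvectorBasis ↑i)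
        rw [hM.mulVec_eigenvectorBasis, i.2]
      rw [Matrix.mulVecLin_apply, this]
      simp
    have hmem := hsub hx
    rw [LinearMap.mem_ker, LinearMap.sub_apply] at hmem
    have heq : M *ᵥ x = μ • x := by
      rw [Matrix.mulVecLin_apply] at hmem
      have := sub_eq_zero.mp hmem
      simpa using this
    have hz : ∀ v ∈ S, x v = 0 := by
      intro v hv
      have h := LinearMap.mem_ker.mp hker
      exact congrFun h ⟨v, hv⟩
    exact hvanish x heq hz
  have hli2 : LinearIndependent ℝ (⇑ρ ∘ fam) := hli.map hdisj
  have hcard := hli2.fintype_card_le_finrank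
  rw [Module.finrank_pi] at hcard
  rw [← Fintype.card_subtype]
  rw [Set.ncard_eq_toFinset_card', Set.toFinset_card]
  exact hcard

lemma eig_finite (M : Matrix V V ℝ) [Nonempty V] :
    {μ : ℝ | Module.End.HasEigenvalue (Matrix.toLin' M) μ}.Finite := by
  apply Set.Finite.subset (Polynomial.finite_setOf_isRoot
    (p := minpoly ℝ (Matrix.toLin' M)) (minpoly.ne_zero (Algebra.IsIntegral.isIntegral _)))
  intro μ h
  exact Module.End.hasEigenvalue_iff_isRoot.mp h

lemma degree_eq_ncard (G : SimpleGraph V) [DecidableRel G.Adj] (W : Set V) [Fintype ↥W]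
    (u : ↥W) : (G.induce W).degree u = (G.neighborSet ↑u ∩ W).ncard := by
  rw [← image_induce_neighborSet, Set.ncard_image_of_injective _ Subtype.val_injective,
    Set.ncard_eq_toFinset_card', Set.toFinset_card]
  rw [SimpleGraph.degree, SimpleGraph.neighborFinset, Set.toFinset_card]

lemma leaf_set_eq (G : SimpleGraph V) [DecidableRel G.Adj] (W : Set V) [Fintype ↥W] :
    {v : V | v ∈ W ∧ (G.neighborSet v ∩ W).ncard = 1} =
      Subtype.val '' {u : ↥W | (G.induce W).degree u = 1} := by
  ext v
  simp only [Set.mem_setOf_eq, Set.mem_image]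
  constructor
  · rintro ⟨hv, h1⟩
    exact ⟨⟨v, hv⟩, by rw [degree_eq_ncard]; exact h1, rfl⟩
  · rintro ⟨u, hu, rfl⟩
    rw [degree_eq_ncard] at hu
    exact ⟨u.2, hu⟩

end Eigen

/-- Number of distinct eigenvalues: let `0 < ε < 1` and let `W` be an induced
forest of `G` without isolated vertices, with `l` leaves and `c` connected
components, such that `|W| - l + c ≥ ε |V|`.  Then the number `ℓ` of distinct
Laplacian eigenvalues of `G` satisfies `ℓ ≥ 1 / (1 - ε)`. -/
theorem number_of_distinct_laplacian_eigenvalues {V : Type*} [Fintype V]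
    [DecidableEq V] [Nonempty V] (G : SimpleGraph V) [DecidableRel G.Adj]
    (ε : ℝ) (hε0 : 0 < ε) (hε1 : ε < 1)
    (W : Set V)
    (hforest : (G.induce W).IsAcyclic)
    (hniso : ∀ v ∈ W, (G.neighborSet v ∩ W).Nonempty)
    (l c : ℕ)
    (hl : l = {v | v ∈ W ∧ (G.neighborSet v ∩ W).ncard = 1}.ncard)
    (hc : c = Nat.card (G.induce W).ConnectedComponent)
    (hbig : (W.ncard : ℝ) - l + c ≥ ε * Fintype.card V) :
    (({μ : ℝ | Module.End.HasEigenvalue (Matrix.toLin' (G.lapMatrix ℝ)) μ}.ncard : ℝ))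
      ≥ 1 / (1 - ε) := by
  classical
  set M := G.lapMatrix ℝ with hMdef
  have hM : M.IsHermitian := (SimpleGraph.posSemidef_lapMatrix ℝ G).1
  letI : Fintype ↥W := (Set.toFinite W).fintype
  have hdegpos : ∀ u : ↥W, 0 < (G.induce W).degree u := by
    intro u
    rw [degree_eq_ncard]
    exact (Set.ncard_pos (Set.toFinite _)).mpr (hniso ↑u u.2)
  have hex := exists_leaf hforest hdegpos
  choose root hrootmem hrootdeg using hex
  set R : Set ↥W := Set.range root with hR
  set Lf : Set ↥W := {u : ↥W | (G.induce W).degree u = 1} with hLf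
  set S : Set V := Wᶜ ∪ (Subtype.val '' (Lf \ R)) with hS
  letI : Fintype ↥S := (Set.toFinite S).fintype
  have hvan : ∀ (x : V → ℝ) (μ : ℝ), M *ᵥ x = μ • x → (∀ v ∈ S, x v = 0) → x = 0 := by
    intro x μ hx hz
    refine forest_vanish G W hforest hdegpos root hrootmem μ x hx ?_ ?_
    · intro v hv
      exact hz v (Or.inl hv)
    · intro u hdeg1 hne
      refine hz ↑u (Or.inr ⟨u, ⟨hdeg1, ?_⟩, rfl⟩)
      rintro ⟨C, hC⟩
      exact hne C hC.symm
  set E := {μ : ℝ | Module.End.HasEigenvalue (Matrix.toLin' M) μ} with hE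
  have hEfin : E.Finite := eig_finite M
  set Efin := hEfin.toFinset with hEfinDef
  have hmem : ∀ i : V, hM.eigenvalues i ∈ Efin :=
    fun i => hEfin.mem_toFinset.mpr (eigenvalues_hasEigenvalue hM i)
  have hfib : Fintype.card V =
      ∑ μ ∈ Efin, (Finset.univ.filter fun i : V => hM.eigenvalues i = μ).card := by
    rw [← Finset.card_univ]
    exact Finset.card_eq_sum_card_fiberwise (fun i _ => hmem i)
  have hcount : Fintype.card V ≤ Efin.card * S.ncard := by
    rw [hfib]
    have := Finset.sum_le_card_nsmul Efin
      (fun μ => (Finset.univ.filter fun i : V => hM.eigenvalues i = μ).card) (S.ncard)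
      (fun μ _ => fiber_bound hM S μ (fun x hx hz => hvan x μ hx hz))
    simpa [smul_eq_mul] using this
  -- cardinalities
  have hRL : R ⊆ Lf := by
    rintro _ ⟨C, rfl⟩
    exact hrootdeg C
  have hrootinj : Function.Injective root := by
    intro C1 C2 h
    rw [← hrootmem C1, ← hrootmem C2, h]
  have hRcard : R.ncard = c := by
    rw [hc, hR, ← Nat.card_coe_set_eq, Nat.card_range_of_injective hrootinj]
  have hLfcard : Lf.ncard = l := by
    rw [hl, leaf_set_eq G W, Set.ncard_image_of_injective _ Subtype.val_injective]
  have hdisj : Disjoint (Wᶜ) (Subtype.val '' (Lf \ R)) := by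
    rw [Set.disjoint_left]
    rintro v hv ⟨u, _, rfl⟩
    exact hv u.2
  have h1 : S.ncard = (Wᶜ).ncard + (Subtype.val '' (Lf \ R)).ncard :=
    Set.ncard_union_eq hdisj (Set.toFinite _) (Set.toFinite _)
  have h2 : (Subtype.val '' (Lf \ R)).ncard = Lf.ncard - R.ncard := by
    rw [Set.ncard_image_of_injective _ Subtype.val_injective, Set.ncard_diff hRL]
  have h3 : W.ncard + (Wᶜ).ncard = Fintype.card V := by rw [Set.ncard_add_ncard_compl W, Nat.card_eq_fintype_card]
  have hcl : c ≤ l := by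
    rw [← hRcard, ← hLfcard]
    exact Set.ncard_le_ncard hRL (Set.toFinite _)
  have hSreal : (S.ncard : ℝ) = (Fintype.card V : ℝ) - W.ncard + l - c := by
    rw [h1, h2, hLfcard, hRcard]
    have h3' : (W.ncard : ℝ) + (Wᶜ).ncard = Fintype.card V := by exact_mod_cast h3
    push_cast [Nat.cast_sub hcl]
    linarith
  have hEcard : E.ncard = Efin.card := Set.ncard_eq_toFinset_card E hEfin
  have hcountR : (Fintype.card V : ℝ) ≤ (E.ncard : ℝ) * S.ncard := by
    rw [hEcard]
    exact_mod_cast hcount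
  have hSle : (S.ncard : ℝ) ≤ (1 - ε) * Fintype.card V := by
    rw [hSreal]
    linarith [hbig]
  have hn : (0 : ℝ) < Fintype.card V := by
    exact_mod_cast Fintype.card_pos
  have hL0 : (0 : ℝ) ≤ (E.ncard : ℝ) := Nat.cast_nonneg _
  rw [ge_iff_le, div_le_iff₀ (by linarith : (0:ℝ) < 1 - ε)]
  nlinarith [mul_le_mul_of_nonneg_left hSle hL0]
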